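/- Let l, m be natural numbers with m ≤ l and m ≡ 0 (mod 4). If H_l^m(−2) ≡ 0 (mod 8), then l ≡ 2 (mod 8). -/

import Mathlib

/-- The coefficient `σ_l^m(k)` of the Holt–Ille polynomial `H_l^m`. -/
def sigmaLM (l m k : ℕ) : ℚ :=
  if (l + m) % 2 = 0 then
    (-2 : ℚ) ^ k * (((l - m) / 2).choose k : ℚ) * (((l + m) / 2).choose k : ℚ) /
      (((2 * k).choose k : ℚ))
  else
    (-2 : ℚ) ^ k * (((l - m) / 2).choose k : ℚ) * (((l + m) / 2).choose k : ℚ) /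
      ((((2 * k).choose k : ℚ)) * (2 * (k : ℚ) + 1))

/-- The value `H_l^m(−2) = Σ_{k=0}^{⌊(l−m)/2⌋} σ_l^m(k)`. -/
def HLM (l m : ℕ) : ℚ := ∑ k ∈ Finset.range ((l - m) / 2 + 1), sigmaLM l m k

/-- `a ≡ b (mod 2^N)` for rationals (with odd denominators), expressed via the 2-adic
norm on `ℚ₂`: it means `‖a − b‖₂ ≤ 2^(−N)`. -/
def Cong2 (a b : ℚ) (N : ℕ) : Prop :=
  ‖((a - b : ℚ) : ℚ_[2])‖ ≤ (2 : ℝ) ^ (-(N : ℤ))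

section Aux

instance fact2 : Fact (Nat.Prime 2) := ⟨by norm_num⟩

lemma choose2_step (a : ℕ) : (a + 16).choose 2 = a.choose 2 + (16 * a + 120) := by
  induction a with
  | zero => decide
  | succ n ih =>
    have h1 : (n + 1 + 16).choose 2 = (n + 16).choose 1 + (n + 16).choose 2 :=
      Nat.choose_succ_succ _ _
    have h2 : (n + 1).choose 2 = n.choose 1 + n.choose 2 := Nat.choose_succ_succ _ _
    have h1' : (n + 16).choose 1 = n + 16 := Nat.choose_one_right _
    have h2' : n.choose 1 = n := Nat.choose_one_right _
    omega

lemma choose3_step (a : ℕ) :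
    (a + 16).choose 3 = a.choose 3 + (8 * a ^ 2 + 112 * a + 560) := by
  induction a with
  | zero => decide
  | succ n ih =>
    have h1 : (n + 1 + 16).choose 3 = (n + 16).choose 2 + (n + 16).choose 3 :=
      Nat.choose_succ_succ _ _
    have h2 : (n + 1).choose 3 = n.choose 2 + n.choose 3 := Nat.choose_succ_succ _ _
    have h3 := choose2_step n
    rw [show (n + 1) ^ 2 = n ^ 2 + 2 * n + 1 by ring]
    omega

/-- even-parity main-part value mod 8 -/
def F8e (x y : ℕ) : ZMod 8 :=
  15 - 15 * (x : ZMod 8) * (y : ZMod 8) + 10 * (x.choose 2 : ZMod 8) * (y.choose 2 : ZMod 8)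
    - 6 * (x.choose 3 : ZMod 8) * (y.choose 3 : ZMod 8)

/-- odd-parity main-part value mod 8 -/
def F8o (x y : ℕ) : ZMod 8 :=
  105 - 35 * (x : ZMod 8) * (y : ZMod 8) + 14 * (x.choose 2 : ZMod 8) * (y.choose 2 : ZMod 8)
    - 6 * (x.choose 3 : ZMod 8) * (y.choose 3 : ZMod 8)

lemma cast16 : ((16 : ℕ) : ZMod 8) = 0 := by decide
lemma cast120 : ((120 : ℕ) : ZMod 8) = 0 := by decide
lemma cast8 : ((8 : ℕ) : ZMod 8) = 0 := by decide
lemma cast112 : ((112 : ℕ) : ZMod 8) = 0 := by decide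
lemma cast560 : ((560 : ℕ) : ZMod 8) = 0 := by decide

lemma h8zero : (8 : ZMod 8) = 0 := by decide

lemma F8e_left (x y : ℕ) : F8e (x + 16) y = F8e x y := by
  unfold F8e
  rw [choose2_step, choose3_step]
  push_cast
  linear_combination (-30 * (y : ZMod 8) + (20 * (x : ZMod 8) + 150) * (y.choose 2 : ZMod 8)
    - (6 * (x : ZMod 8) ^ 2 + 84 * (x : ZMod 8) + 420) * (y.choose 3 : ZMod 8)) * h8zero

lemma F8e_right (x y : ℕ) : F8e x (y + 16) = F8e x y := by
  unfold F8e
  rw [choose2_step, choose3_step]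
  push_cast
  linear_combination (-30 * (x : ZMod 8) + (20 * (y : ZMod 8) + 150) * (x.choose 2 : ZMod 8)
    - (6 * (y : ZMod 8) ^ 2 + 84 * (y : ZMod 8) + 420) * (x.choose 3 : ZMod 8)) * h8zero

lemma F8o_left (x y : ℕ) : F8o (x + 16) y = F8o x y := by
  unfold F8o
  rw [choose2_step, choose3_step]
  push_cast
  linear_combination (-70 * (y : ZMod 8) + (28 * (x : ZMod 8) + 210) * (y.choose 2 : ZMod 8)
    - (6 * (x : ZMod 8) ^ 2 + 84 * (x : ZMod 8) + 420) * (y.choose 3 : ZMod 8)) * h8zero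

lemma F8o_right (x y : ℕ) : F8o x (y + 16) = F8o x y := by
  unfold F8o
  rw [choose2_step, choose3_step]
  push_cast
  linear_combination (-70 * (x : ZMod 8) + (28 * (y : ZMod 8) + 210) * (x.choose 2 : ZMod 8)
    - (6 * (y : ZMod 8) ^ 2 + 84 * (y : ZMod 8) + 420) * (x.choose 3 : ZMod 8)) * h8zero

lemma F8e_mod (x y : ℕ) : F8e x y = F8e (x % 16) (y % 16) := by
  have hx : ∀ q r y', F8e (16 * q + r) y' = F8e r y' := by
    intro q
    induction q with
    | zero => intro r y'; simp
    | succ n ih =>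
      intro r y'
      have : 16 * (n + 1) + r = (16 * n + r) + 16 := by ring
      rw [this, F8e_left, ih]
  have hy : ∀ q r x', F8e x' (16 * q + r) = F8e x' r := by
    intro q
    induction q with
    | zero => intro r x'; simp
    | succ n ih =>
      intro r x'
      have : 16 * (n + 1) + r = (16 * n + r) + 16 := by ring
      rw [this, F8e_right, ih]
  conv_lhs => rw [show x = 16 * (x / 16) + x % 16 by omega,
    show y = 16 * (y / 16) + y % 16 by omega]
  rw [hx, hy]

lemma F8o_mod (x y : ℕ) : F8o x y = F8o (x % 16) (y % 16) := by
  have hx : ∀ q r y', F8o (16 * q + r) y' = F8o r y' := by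
    intro q
    induction q with
    | zero => intro r y'; simp
    | succ n ih =>
      intro r y'
      have : 16 * (n + 1) + r = (16 * n + r) + 16 := by ring
      rw [this, F8o_left, ih]
  have hy : ∀ q r x', F8o x' (16 * q + r) = F8o x' r := by
    intro q
    induction q with
    | zero => intro r x'; simp
    | succ n ih =>
      intro r x'
      have : 16 * (n + 1) + r = (16 * n + r) + 16 := by ring
      rw [this, F8o_right, ih]
  conv_lhs => rw [show x = 16 * (x / 16) + x % 16 by omega,
    show y = 16 * (y / 16) + y % 16 by omega]
  rw [hx, hy]

lemma check_even : ∀ x < 16, ∀ y < 16, x % 4 = y % 4 → F8e x y = 0 → (x + y) % 8 = 2 := by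
  decide

lemma check_odd : ∀ x < 16, ∀ y < 16, x % 4 = y % 4 → F8o x y ≠ 0 := by
  decide

lemma odd_doubleFactorial (j : ℕ) : ¬ 2 ∣ (2 * j + 1).doubleFactorial := by
  induction j with
  | zero => decide
  | succ n ih =>
    have : 2 * (n + 1) + 1 = (2 * n + 1) + 2 := by ring
    rw [this, Nat.doubleFactorial_add_two]
    intro h
    rcases (Nat.Prime.dvd_mul (by norm_num)).1 h with h' | h'
    · omega
    · exact ih h'

lemma centralBinom_eq (k : ℕ) :
    (2 * k).choose k * k.factorial = 2 ^ k * (2 * k - 1).doubleFactorial := by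
  cases k with
  | zero => decide
  | succ n =>
    have hle : n + 1 ≤ 2 * (n + 1) := by omega
    have h1 := Nat.choose_mul_factorial_mul_factorial hle
    rw [show 2 * (n + 1) - (n + 1) = n + 1 by omega] at h1
    have h4 : (2 * (n + 1)).factorial
        = 2 ^ (n + 1) * (n + 1).factorial * (2 * n + 1).doubleFactorial := by
      rw [show 2 * (n + 1) = (2 * n + 1) + 1 by ring, Nat.factorial_eq_mul_doubleFactorial,
        show (2 * n + 1) + 1 = 2 * (n + 1) by ring, Nat.doubleFactorial_two_mul]
    rw [show 2 * (n + 1) - 1 = 2 * n + 1 by omega]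
    exact Nat.eq_of_mul_eq_mul_right (Nat.factorial_pos (n + 1)) (by rw [h1, h4]; ring)

lemma sigma_tail_norm (l m k : ℕ) (hk : 4 ≤ k) :
    padicNorm 2 (sigmaLM l m k) ≤ (2 : ℚ) ^ (-3 : ℤ) := by
  set a := (l - m) / 2
  set b := (l + m) / 2
  have hC : ((2 * k).choose k : ℚ) ≠ 0 := by
    exact_mod_cast (Nat.choose_pos (by omega)).ne'
  have hdf : ¬ (2 : ℤ) ∣ ((2 * k - 1).doubleFactorial : ℤ) := by
    have h6 : 2 * k - 1 = 2 * (k - 1) + 1 := by omega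
    rw [h6]
    exact_mod_cast odd_doubleFactorial (k - 1)
  have hdfQ : ((2 * k - 1).doubleFactorial : ℚ) ≠ 0 := by
    exact_mod_cast (Nat.doubleFactorial_pos _).ne'
  have hkey : ((2 * k).choose k : ℚ) * (k.factorial : ℚ)
      = 2 ^ k * ((2 * k - 1).doubleFactorial : ℚ) := by
    exact_mod_cast centralBinom_eq k
  have hneg : ((-2 : ℚ)) ^ k = (-1) ^ k * 2 ^ k := by
    rw [← neg_one_mul, mul_pow]
  have hnum : (8 : ℤ) ∣ ((-1) ^ k * (k.factorial : ℤ) * (a.choose k : ℤ) * (b.choose k : ℤ)) := by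
    have h8 : (8 : ℤ) ∣ (k.factorial : ℤ) := by
      have : (24 : ℕ) ∣ k.factorial := by
        calc (24 : ℕ) = Nat.factorial 4 := by decide
        _ ∣ k.factorial := Nat.factorial_dvd_factorial hk
      exact dvd_trans (by norm_num) (Int.natCast_dvd_natCast.2 this)
    exact Dvd.dvd.mul_right (Dvd.dvd.mul_right (Dvd.dvd.mul_left h8 _) _) _
  have hnorm_num : padicNorm 2 ((((-1) ^ k * (k.factorial : ℤ) * (a.choose k : ℤ) *
      (b.choose k : ℤ)) : ℤ) : ℚ) ≤ (2 : ℚ) ^ (-3 : ℤ) := by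
    have := (padicNorm.dvd_iff_norm_le (p := 2) (n := 3)
      (z := ((-1) ^ k * (k.factorial : ℤ) * (a.choose k : ℤ) * (b.choose k : ℤ)))).1
      (by exact_mod_cast hnum)
    simpa using this
  unfold sigmaLM
  split_ifs with hpar
  · have heq : (-2 : ℚ) ^ k * (a.choose k : ℚ) * (b.choose k : ℚ) / ((2 * k).choose k : ℚ)
        = ((((-1) ^ k * (k.factorial : ℤ) * (a.choose k : ℤ) * (b.choose k : ℤ)) : ℤ) : ℚ)
          / ((((2 * k - 1).doubleFactorial : ℤ)) : ℚ) := by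
      rw [div_eq_div_iff hC (by exact_mod_cast hdfQ)]
      push_cast
      rw [hneg]
      linear_combination (-((-1 : ℚ)) ^ k * (a.choose k : ℚ) * (b.choose k : ℚ)) * hkey
    rw [heq, padicNorm.div]
    rw [(padicNorm.int_eq_one_iff _).2 hdf]
    simpa using hnorm_num
  · have h2k1 : (2 * (k : ℚ) + 1) = (((2 * k + 1 : ℕ) : ℤ) : ℚ) := by push_cast; ring
    have hoddd : ¬ (2 : ℤ) ∣ (((2 * k - 1).doubleFactorial : ℤ) * ((2 * k + 1 : ℕ) : ℤ)) := by
      intro h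
      rcases (Int.Prime.dvd_mul' (by norm_num) h) with h' | h'
      · exact hdf h'
      · rcases h' with ⟨t, ht⟩
        have ht' : ((2 * k + 1 : ℕ) : ℤ) = 2 * t := by exact_mod_cast ht
        omega
    have h2k1Q : (((2 * k + 1 : ℕ) : ℚ)) ≠ 0 := by positivity
    have heq : (-2 : ℚ) ^ k * (a.choose k : ℚ) * (b.choose k : ℚ) /
          (((2 * k).choose k : ℚ) * (2 * (k : ℚ) + 1))
        = ((((-1) ^ k * (k.factorial : ℤ) * (a.choose k : ℤ) * (b.choose k : ℤ)) : ℤ) : ℚ)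
          / ((((2 * k - 1).doubleFactorial : ℤ) * ((2 * k + 1 : ℕ) : ℤ) : ℤ) : ℚ) := by
      rw [div_eq_div_iff (by push_cast; positivity) (by push_cast; positivity)]
      push_cast
      rw [hneg]
      linear_combination (-((-1 : ℚ)) ^ k * (a.choose k : ℚ) * (b.choose k : ℚ)
        * (2 * (k : ℚ) + 1)) * hkey
    rw [heq, padicNorm.div]
    rw [(padicNorm.int_eq_one_iff _).2 hoddd]
    simpa using hnorm_num

lemma sigma_zero_of_lt (l m k : ℕ) (h : (l - m) / 2 < k) : sigmaLM l m k = 0 := by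
  unfold sigmaLM
  rw [Nat.choose_eq_zero_of_lt h]
  split_ifs <;> simp

end Aux

/-- If `m ≡ 0 (mod 4)`, `m ≤ l` and `H_l^m(−2) ≡ 0 (mod 8)`, then `l ≡ 2 (mod 8)`. -/
theorem l_mod_eight_of_HLM_cong_zero (l m : ℕ) (hml : m ≤ l) (hm : m % 4 = 0)
    (h : Cong2 (HLM l m) 0 3) : l % 8 = 2 := by
  have hq : padicNorm 2 (HLM l m) ≤ (2 : ℚ) ^ (-3 : ℤ) := by
    unfold Cong2 at h
    rw [sub_zero, Padic.eq_padicNorm] at h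
    have h2 : ((2 : ℝ)) ^ (-((3 : ℕ) : ℤ)) = (((2 : ℚ) ^ (-3 : ℤ) : ℚ) : ℝ) := by
      push_cast
      norm_num
    rw [h2] at h
    exact_mod_cast h
  set a := (l - m) / 2 with ha
  set b := (l + m) / 2 with hb
  set S : ℚ := ∑ k ∈ Finset.range 4, sigmaLM l m k with hS
  set M := max 4 (a + 1) with hM
  set T : ℚ := ∑ k ∈ Finset.Ico 4 M, sigmaLM l m k with hT
  have hsplit : HLM l m = S + T := by
    unfold HLM
    have h1 : ∑ k ∈ Finset.range (a + 1), sigmaLM l m k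
        = ∑ k ∈ Finset.range M, sigmaLM l m k := by
      apply Finset.sum_subset (Finset.range_subset_range.2 (le_max_right _ _))
      intro x hx hnx
      simp only [Finset.mem_range] at hx hnx
      exact sigma_zero_of_lt l m x (by omega)
    rw [h1, hS, hT]
    rw [Finset.range_eq_Ico, ← Finset.sum_Ico_consecutive (sigmaLM l m)
      (by omega : 0 ≤ 4) (by omega : 4 ≤ M), ← Finset.range_eq_Ico]
  have hTnorm : padicNorm 2 T ≤ (2 : ℚ) ^ (-3 : ℤ) := by
    rcases Finset.eq_empty_or_nonempty (Finset.Ico 4 M) with he | hne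
    · rw [hT, he, Finset.sum_empty, padicNorm.zero]
      positivity
    · exact padicNorm.sum_le hne fun i hi =>
        sigma_tail_norm l m i (Finset.mem_Ico.1 hi).1
  have hSnorm : padicNorm 2 S ≤ (2 : ℚ) ^ (-3 : ℤ) := by
    have hs : S = HLM l m + (-T) := by rw [hsplit]; ring
    rw [hs]
    calc padicNorm 2 (HLM l m + (-T)) ≤ max (padicNorm 2 (HLM l m)) (padicNorm 2 (-T)) :=
          padicNorm.nonarchimedean
      _ ≤ (2 : ℚ) ^ (-3 : ℤ) := by
          rw [padicNorm.neg]
          exact max_le hq hTnorm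
  have c42 : Nat.choose 4 2 = 6 := by decide
  have c63 : Nat.choose 6 3 = 20 := by decide
  have hm2 : m % 2 = 0 := by omega
  rcases Nat.even_or_odd l with hl | hl
  · -- even case
    have hpar : (l + m) % 2 = 0 := by
      rcases hl with ⟨c, hc⟩; omega
    set N : ℤ := 15 - 15 * (a : ℤ) * b + 10 * (a.choose 2) * (b.choose 2)
        - 6 * (a.choose 3) * (b.choose 3) with hN
    have hmain : (15 : ℚ) * S = ((N : ℤ) : ℚ) := by
      rw [hS, hN]
      rw [Finset.sum_range_succ, Finset.sum_range_succ, Finset.sum_range_succ,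
        Finset.sum_range_one]
      unfold sigmaLM
      rw [← ha, ← hb]
      simp only [hpar, if_pos]
      norm_num [Nat.choose_one_right, c42, c63]
      ring
    have hns : padicNorm 2 S = padicNorm 2 ((N : ℤ) : ℚ) := by
      have h15 : padicNorm 2 ((15 : ℤ) : ℚ) = 1 :=
        (padicNorm.int_eq_one_iff _).2 (by norm_num)
      have h15' : padicNorm 2 ((15 : ℚ) * S) = padicNorm 2 S := by
        rw [padicNorm.mul]
        rw [show (15 : ℚ) = ((15 : ℤ) : ℚ) by norm_num, h15, one_mul]
      rw [← h15', hmain]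
    have hdvd : (8 : ℤ) ∣ N := by
      have h83 : ((2 ^ 3 : ℕ) : ℤ) = 8 := by norm_num
      rw [← h83, padicNorm.dvd_iff_norm_le]
      push_cast
      exact hns ▸ hSnorm
    have hF : F8e a b = 0 := by
      have hz : ((N : ℤ) : ZMod 8) = 0 := (ZMod.intCast_zmod_eq_zero_iff_dvd _ _).2 hdvd
      rw [← hz, hN]
      unfold F8e
      push_cast
      ring
    have hF' : F8e (a % 16) (b % 16) = 0 := by rw [← F8e_mod]; exact hF
    have hres := check_even (a % 16) (by omega) (b % 16) (by omega) (by omega) hF'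
    have hab : a + b = l := by omega
    omega
  · -- odd case
    exfalso
    have hpar : ¬ (l + m) % 2 = 0 := by
      rcases hl with ⟨c, hc⟩; omega
    set N : ℤ := 105 - 35 * (a : ℤ) * b + 14 * (a.choose 2) * (b.choose 2)
        - 6 * (a.choose 3) * (b.choose 3) with hN
    have hmain : (105 : ℚ) * S = ((N : ℤ) : ℚ) := by
      rw [hS, hN]
      rw [Finset.sum_range_succ, Finset.sum_range_succ, Finset.sum_range_succ,
        Finset.sum_range_one]
      unfold sigmaLM
      rw [← ha, ← hb]
      simp only [hpar, if_neg, if_false]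
      norm_num [Nat.choose_one_right, c42, c63]
      ring
    have hns : padicNorm 2 S = padicNorm 2 ((N : ℤ) : ℚ) := by
      have h105 : padicNorm 2 ((105 : ℤ) : ℚ) = 1 :=
        (padicNorm.int_eq_one_iff _).2 (by norm_num)
      have h105' : padicNorm 2 ((105 : ℚ) * S) = padicNorm 2 S := by
        rw [padicNorm.mul]
        rw [show (105 : ℚ) = ((105 : ℤ) : ℚ) by norm_num, h105, one_mul]
      rw [← h105', hmain]
    have hdvd : (8 : ℤ) ∣ N := by
      have h83 : ((2 ^ 3 : ℕ) : ℤ) = 8 := by norm_num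
      rw [← h83, padicNorm.dvd_iff_norm_le]
      push_cast
      exact hns ▸ hSnorm
    have hF : F8o a b = 0 := by
      have hz : ((N : ℤ) : ZMod 8) = 0 := (ZMod.intCast_zmod_eq_zero_iff_dvd _ _).2 hdvd
      rw [← hz, hN]
      unfold F8o
      push_cast
      ring
    have hF' : F8o (a % 16) (b % 16) = 0 := by rw [← F8o_mod]; exact hF
    exact check_odd (a % 16) (by omega) (b % 16) (by omega) (by omega) hF'
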